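/- The function L(z) = log(1-z) = -Σ_{k≥1} z^k/k is a cyclic vector for the semigroup {T_n : n ≥ 1} acting on H²_0 = {f ∈ H² : f(0) = 0}, i.e., the span of {log(1-z^n) : n ≥ 1} is dense in H²_0. -/

import Mathlib

open Complex Finset

/-- Maclaurin coefficients of `z ↦ log (1 - z^n)`. -/
noncomputable def logCoeff (n j : ℕ) : ℂ := if n ∣ j ∧ j ≠ 0 then -(n : ℂ) / j else 0

lemma logCoeff_norm_le {n : ℕ} (hn : 1 ≤ n) (j : ℕ) : ‖logCoeff n j‖ ≤ 1 := by
  unfold logCoeff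
  split_ifs with h
  · rcases h with ⟨hd, hj⟩
    have hnj : n ≤ j := Nat.le_of_dvd (Nat.pos_of_ne_zero hj) hd
    rw [norm_div, norm_neg]
    have h1 : ‖(n : ℂ)‖ = (n : ℝ) := by simp
    have h2 : ‖(j : ℂ)‖ = (j : ℝ) := by simp
    rw [h1, h2, div_le_one (by exact_mod_cast Nat.pos_of_ne_zero hj)]
    exact_mod_cast hnj
  · simp

lemma logCoeff_hasSum {n : ℕ} (hn : 1 ≤ n) {z : ℂ} (hz : ‖z‖ < 1) :
    HasSum (fun j => logCoeff n j * z ^ j) (Complex.log (1 - z ^ n)) := by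
  have hzn : ‖z ^ n‖ < 1 := by
    rw [norm_pow]
    exact pow_lt_one₀ (norm_nonneg z) hz (by omega)
  have h := (Complex.hasSum_taylorSeries_neg_log hzn).neg
  rw [neg_neg] at h
  have hinj : Function.Injective (fun m : ℕ => n * m) := fun a b hab => by
    have := (Nat.mul_right_inj (show n ≠ 0 by omega)).mp hab
    exact this
  have h0 : ∀ j ∉ Set.range (fun m : ℕ => n * m), logCoeff n j * z ^ j = 0 := by
    intro j hj
    have : ¬ n ∣ j := fun ⟨m, hm⟩ => hj ⟨m, hm.symm⟩
    simp [logCoeff, this]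
  rw [← hinj.hasSum_iff h0]
  refine (congrArg (fun F : ℕ → ℂ => HasSum F (Complex.log (1 - z ^ n))) ?_).mpr h
  funext m
  simp only [Function.comp]
  rcases Nat.eq_zero_or_pos m with rfl | hm
  · simp [logCoeff]
  · have hnm : n ∣ n * m := dvd_mul_right n m
    have hne : n * m ≠ 0 := by positivity
    have hnc : (n : ℂ) ≠ 0 := by exact_mod_cast (by omega : n ≠ 0)
    have hmc : (m : ℂ) ≠ 0 := by exact_mod_cast (by omega : m ≠ 0)
    simp only [logCoeff, hnm, hne, ne_eq, not_false_iff, and_self, if_true]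
    rw [← pow_mul]
    push_cast
    field_simp

/-- Coefficient identification for a function with a bounded-coefficient power series on the
unit disk. -/
lemma coeff_eq_of_hasSum {g : ℂ → ℂ} {B : ℕ → ℂ} {C : ℝ} (hB : ∀ j, ‖B j‖ ≤ C)
    (hsum : ∀ z : ℂ, ‖z‖ < 1 → HasSum (fun j => B j * z ^ j) (g z)) (j : ℕ) :
    iteratedDeriv j g 0 = (j.factorial : ℂ) * B j := by
  have hball : HasFPowerSeriesOnBall g (FormalMultilinearSeries.ofScalars ℂ B) 0 1 := by
    refine ⟨?_, zero_lt_one, ?_⟩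
    · have : ((1 : NNReal) : ENNReal) ≤ (FormalMultilinearSeries.ofScalars ℂ B).radius := by
        apply FormalMultilinearSeries.le_radius_of_bound _ C
        intro n
        rw [FormalMultilinearSeries.ofScalars_norm]
        simpa using hB n
      simpa using this
    · intro y hy
      rw [mem_emetric_ball_zero_iff] at hy
      have hy' : ‖y‖ < 1 := by
        rw [enorm_eq_nnnorm, ← ENNReal.coe_one, ENNReal.coe_lt_coe] at hy
        exact_mod_cast hy
      have := hsum y hy'
      simp only [FormalMultilinearSeries.ofScalars_apply_eq, smul_eq_mul, zero_add]
      exact this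
  have h := hball.factorial_smul (1 : ℂ) j
  rw [iteratedDeriv_eq_iteratedFDeriv]
  rw [← h, FormalMultilinearSeries.ofScalars_apply_eq]
  simp only [smul_eq_mul, one_pow, mul_one, nsmul_eq_mul]

open ArithmeticFunction in
lemma sum_mu_divisors (Q t : ℕ) (hQ : Q ≠ 0) (ht : t ≠ 0) :
    ∑ m ∈ Q.divisors, (if m ∣ t then ((moebius m : ℤ) : ℂ) else 0)
      = if Nat.gcd Q t = 1 then 1 else 0 := by
  have hg : Nat.gcd Q t ≠ 0 := fun h => hQ (Nat.eq_zero_of_gcd_eq_zero_left h)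
  have h1 : ∑ m ∈ Q.divisors, (if m ∣ t then ((moebius m : ℤ) : ℂ) else 0)
      = ∑ m ∈ (Nat.gcd Q t).divisors, ((moebius m : ℤ) : ℂ) := by
    rw [← Finset.sum_filter]
    apply Finset.sum_congr _ (fun _ _ => rfl)
    ext m
    simp only [Finset.mem_filter, Nat.mem_divisors, Nat.dvd_gcd_iff, hQ, hg, ne_eq,
      not_false_iff, and_true]
  rw [h1]
  have h2 := ArithmeticFunction.coe_mul_zeta_apply (R := ℂ)
    (f := ((moebius : ArithmeticFunction ℤ) : ArithmeticFunction ℂ)) (x := Nat.gcd Q t)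
  rw [ArithmeticFunction.coe_moebius_mul_coe_zeta, ArithmeticFunction.one_apply] at h2
  rw [h2]
  apply Finset.sum_congr rfl
  intro m _
  simp [ArithmeticFunction.intCoe_apply]

lemma tsum_ite_tail (h : ℕ → ℝ) (K : ℕ) :
    ∑' j, (if K < j then h j else 0) = ∑' k, h (k + (K + 1)) := by
  have hinj : Function.Injective (fun k : ℕ => k + (K + 1)) := fun a b hab => by
    simpa using hab
  have h0 : ∀ j ∉ Set.range (fun k : ℕ => k + (K + 1)),
      (if K < j then h j else 0) = 0 := by
    intro j hj
    have : ¬ K < j := by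
      intro hKj
      exact hj ⟨j - (K + 1), by simp; omega⟩
    simp [this]
  have hsupp : Function.support (fun j => if K < j then h j else 0) ⊆
      Set.range (fun k : ℕ => k + (K + 1)) := by
    intro j hj
    by_contra hc
    exact hj (h0 j hc)
  rw [← hinj.tsum_eq hsupp]
  apply tsum_congr
  intro k
  have : K < k + (K + 1) := by omega
  simp [this]

open ArithmeticFunction in
lemma S_eval (a : ℕ → ℂ) (K Q : ℕ) (hQ0 : Q ≠ 0) (j : ℕ) (hj : j ≠ 0) :
    ∑ n ∈ Icc 1 (K * Q), (-∑ k ∈ Icc 1 K, ∑ m ∈ Q.divisors,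
        (if m * k = n then a k * ((moebius m : ℤ) : ℂ) / m else 0)) * logCoeff n j
      = ∑ k ∈ Icc 1 K,
        (if k ∣ j then (if Nat.gcd Q (j / k) = 1 then (k : ℂ) * a k / j else 0) else 0) := by
  have e1 : ∀ n ∈ Icc 1 (K * Q),
      (-∑ k ∈ Icc 1 K, ∑ m ∈ Q.divisors,
        (if m * k = n then a k * ((moebius m : ℤ) : ℂ) / m else 0)) * logCoeff n j
      = ∑ k ∈ Icc 1 K, ∑ m ∈ Q.divisors,
        (if m * k = n then -(a k * ((moebius m : ℤ) : ℂ) / m * logCoeff n j) else 0) := by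
    intro n _
    rw [neg_mul, Finset.sum_mul, ← Finset.sum_neg_distrib]
    apply Finset.sum_congr rfl
    intro k _
    rw [Finset.sum_mul, ← Finset.sum_neg_distrib]
    apply Finset.sum_congr rfl
    intro m _
    split_ifs with h
    · ring
    · simp
  rw [Finset.sum_congr rfl e1]
  rw [Finset.sum_comm]
  have e2 : ∀ k ∈ Icc 1 K,
      ∑ n ∈ Icc 1 (K * Q), ∑ m ∈ Q.divisors,
        (if m * k = n then -(a k * ((moebius m : ℤ) : ℂ) / m * logCoeff n j) else 0)
      = ∑ m ∈ Q.divisors, -(a k * ((moebius m : ℤ) : ℂ) / m * logCoeff (m * k) j) := by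
    intro k hk
    obtain ⟨hk1, hkK⟩ := Finset.mem_Icc.mp hk
    rw [Finset.sum_comm]
    apply Finset.sum_congr rfl
    intro m hm
    have hm1 : 1 ≤ m := Nat.pos_of_mem_divisors hm
    have hmQ : m ≤ Q := Nat.divisor_le hm
    have hmem : m * k ∈ Icc 1 (K * Q) := by
      rw [Finset.mem_Icc]
      constructor
      · exact Nat.one_le_iff_ne_zero.mpr (by positivity)
      · calc m * k ≤ Q * K := Nat.mul_le_mul hmQ hkK
          _ = K * Q := Nat.mul_comm Q K
    rw [Finset.sum_ite_eq (Icc 1 (K * Q)) (m * k)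
      (fun n => -(a k * ((moebius m : ℤ) : ℂ) / m * logCoeff n j)), if_pos hmem]
  rw [Finset.sum_congr rfl e2]
  apply Finset.sum_congr rfl
  intro k hk
  obtain ⟨hk1, hkK⟩ := Finset.mem_Icc.mp hk
  by_cases hkj : k ∣ j
  · rw [if_pos hkj]
    have htne : j / k ≠ 0 := by
      have := Nat.div_pos (Nat.le_of_dvd (Nat.pos_of_ne_zero hj) hkj) (by omega)
      omega
    have step : ∀ m ∈ Q.divisors, -(a k * ((moebius m : ℤ) : ℂ) / m * logCoeff (m * k) j)
        = (if m ∣ j / k then ((moebius m : ℤ) : ℂ) else 0) * ((k : ℂ) * a k / j) := by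
      intro m hm
      have hm0 : m ≠ 0 := (Nat.pos_of_mem_divisors hm).ne'
      have hmk : m * k ∣ j ↔ m ∣ j / k := by
        rw [Nat.dvd_div_iff_mul_dvd hkj, mul_comm]
      by_cases hmj : m ∣ j / k
      · have hd : m * k ∣ j := hmk.mpr hmj
        simp only [logCoeff, hd, hj, ne_eq, not_false_iff, and_self, if_true, if_pos hmj]
        have hmc : (m : ℂ) ≠ 0 := Nat.cast_ne_zero.mpr hm0
        have hjc : (j : ℂ) ≠ 0 := Nat.cast_ne_zero.mpr hj
        have hkc : (k : ℂ) ≠ 0 := Nat.cast_ne_zero.mpr (by omega)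
        push_cast
        field_simp
      · have hd : ¬ (m * k ∣ j) := fun h => hmj (hmk.mp h)
        simp [logCoeff, hd, hmj]
    rw [Finset.sum_congr rfl step, ← Finset.sum_mul,
      sum_mu_divisors Q (j / k) hQ0 htne]
    by_cases hg : Nat.gcd Q (j / k) = 1 <;> simp [hg]
  · rw [if_neg hkj]
    apply Finset.sum_eq_zero
    intro m _
    have : ¬ (m * k ∣ j ∧ j ≠ 0) := by
      rintro ⟨hd, -⟩
      exact hkj (dvd_trans (dvd_mul_left k m) hd)
    simp [logCoeff, this]

/-- If `k` properly divides `j ≤ P` and every prime `≤ P` divides `Q`,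
then `gcd Q (j/k) ≠ 1`. -/
lemma gcd_ne_one {Q P j k : ℕ} (hpQ : ∀ p : ℕ, p.Prime → p ≤ P → p ∣ Q)
    (hkj : k ∣ j) (hkne : k ≠ j) (hj0 : j ≠ 0) (hjP : j ≤ P) :
    Nat.gcd Q (j / k) ≠ 1 := by
  have hk0 : k ≠ 0 := by
    rintro rfl
    exact hj0 (Nat.eq_zero_of_zero_dvd hkj)
  have ht0 : j / k ≠ 0 := by
    have := Nat.div_pos (Nat.le_of_dvd (Nat.pos_of_ne_zero hj0) hkj) (Nat.pos_of_ne_zero hk0)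
    omega
  have ht1 : j / k ≠ 1 := by
    intro h1
    apply hkne
    have := Nat.div_mul_cancel hkj
    rw [h1, one_mul] at this
    omega
  set t := j / k with htdef
  have hp : (t.minFac).Prime := Nat.minFac_prime ht1
  have hpt : t.minFac ∣ t := Nat.minFac_dvd t
  have hptP : t.minFac ≤ P := by
    have h1 : t.minFac ≤ t := Nat.minFac_le (Nat.pos_of_ne_zero ht0)
    have h2 : t ≤ j := Nat.div_le_self j k
    omega
  have hpQ' : t.minFac ∣ Q := hpQ _ hp hptP
  intro hg
  have hd1 : t.minFac ∣ 1 := hg ▸ Nat.dvd_gcd hpQ' hpt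
  exact hp.ne_one (Nat.dvd_one.mp hd1)

/-- L(z) = log(1-z) is cyclic for {T_n} on H²₀ = {f ∈ H² : f(0) = 0}:
    the span of {log(1-z^n) : n ≥ 1} is dense in H²₀ (with the H² norm computed via
    Maclaurin coefficients iteratedDeriv j · 0 / j!). -/
theorem stmt19 (f : ℂ → ℂ) (hf : DifferentiableOn ℂ f (Metric.ball (0 : ℂ) 1))
    (hf0 : f 0 = 0)
    (hf2 : Summable fun j : ℕ => ‖iteratedDeriv j f 0 / (j.factorial : ℂ)‖ ^ 2)
    (ε : ℝ) (hε : 0 < ε) :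
    ∃ (N : ℕ) (c : ℕ → ℂ),
      ∑' j : ℕ, ‖iteratedDeriv j
          (fun z : ℂ => f z - ∑ n ∈ Finset.Icc 1 N, c n * Complex.log (1 - z ^ n)) 0
        / (j.factorial : ℂ)‖ ^ 2 < ε ^ 2 := by
  classical
  set a := fun j : ℕ => iteratedDeriv j f 0 / (j.factorial : ℂ) with ha_def
  have ha0 : a 0 = 0 := by rw [ha_def]; simp [iteratedDeriv_zero, hf0]
  obtain ⟨Ca, hCa⟩ : ∃ C : ℝ, ∀ j, ‖a j‖ ≤ C := by
    refine ⟨Real.sqrt (∑' j, ‖a j‖ ^ 2), fun j => ?_⟩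
    have h1 : ‖a j‖ ^ 2 ≤ ∑' i, ‖a i‖ ^ 2 := Summable.le_tsum hf2 j (fun i _ => by positivity)
    have h2 := Real.sqrt_le_sqrt h1
    rwa [Real.sqrt_sq (norm_nonneg _)] at h2
  have hfsum : ∀ z : ℂ, ‖z‖ < 1 → HasSum (fun j => a j * z ^ j) (f z) := by
    intro z hz
    have h := Complex.hasSum_taylorSeries_on_ball hf
      (by simpa [Metric.mem_ball, dist_eq_norm] using hz)
    have he : (fun n : ℕ => a n * z ^ n)
        = fun n : ℕ => (n.factorial : ℂ)⁻¹ • (z - 0) ^ n • iteratedDeriv n f 0 := by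
      funext n
      rw [ha_def]
      simp only [smul_eq_mul, sub_zero]
      ring
    rw [he]
    exact h
  -- choose K
  obtain ⟨K, hK1, hKtail⟩ : ∃ K : ℕ, 1 ≤ K ∧ ∑' k, ‖a (k + (K + 1))‖ ^ 2 < ε ^ 2 / 8 := by
    have ht := tendsto_sum_nat_add (fun j => ‖a j‖ ^ 2)
    have hev := ht.eventually (gt_mem_nhds (by positivity : (0:ℝ) < ε ^ 2 / 8))
    obtain ⟨i₀, hi₀⟩ := Filter.eventually_atTop.mp hev
    exact ⟨max i₀ 1, le_max_right _ _, hi₀ _ (by omega)⟩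
  set Bb := ∑ k ∈ Icc 1 K, (k : ℝ) * ‖a k‖ with hBb_def
  have hBb0 : 0 ≤ Bb := Finset.sum_nonneg fun k _ => by positivity
  -- choose P
  obtain ⟨P, hPK, hPtail⟩ : ∃ P : ℕ, K ≤ P ∧
      ∑' k, (1 / ((k + (P + 1) : ℕ) : ℝ)) ^ 2 < ε ^ 2 / (8 * (Bb ^ 2 + 1)) := by
    have ht := tendsto_sum_nat_add (fun j : ℕ => (1 / (j : ℝ)) ^ 2)
    have hev := ht.eventually (gt_mem_nhds
      (by positivity : (0:ℝ) < ε ^ 2 / (8 * (Bb ^ 2 + 1))))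
    obtain ⟨i₀, hi₀⟩ := Filter.eventually_atTop.mp hev
    exact ⟨max i₀ K, le_max_right _ _, hi₀ _ (by omega)⟩
  have hP1 : 1 ≤ P := le_trans hK1 hPK
  -- the modulus Q
  set Q := ∏ p ∈ Nat.primesBelow (P + 1), p with hQ_def
  have hQ0 : Q ≠ 0 := by
    rw [hQ_def]
    exact Finset.prod_ne_zero_iff.mpr fun p hp =>
      (Nat.prime_of_mem_primesBelow hp).ne_zero
  have hpQ : ∀ p : ℕ, p.Prime → p ≤ P → p ∣ Q := by
    intro p hp hle
    exact Finset.dvd_prod_of_mem _ (Nat.mem_primesBelow.mpr ⟨by omega, hp⟩)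
  set N := K * Q with hN_def
  set c := fun n : ℕ => -∑ k ∈ Icc 1 K, ∑ m ∈ Q.divisors,
    (if m * k = n then a k * ((ArithmeticFunction.moebius m : ℤ) : ℂ) / m else 0) with hc_def
  refine ⟨N, c, ?_⟩
  set S := fun j : ℕ => ∑ n ∈ Icc 1 N, c n * logCoeff n j with hS_def
  -- power series of the approximant
  have hgsum : ∀ z : ℂ, ‖z‖ < 1 → HasSum (fun j => (a j - S j) * z ^ j)
      (f z - ∑ n ∈ Finset.Icc 1 N, c n * Complex.log (1 - z ^ n)) := by
    intro z hz
    have h2 : HasSum (fun j => ∑ n ∈ Icc 1 N, c n * (logCoeff n j * z ^ j))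
        (∑ n ∈ Icc 1 N, c n * Complex.log (1 - z ^ n)) := by
      apply hasSum_sum
      intro n hn
      exact (logCoeff_hasSum (Finset.mem_Icc.mp hn).1 hz).mul_left (c n)
    have h3 := (hfsum z hz).sub h2
    have he : (fun j => (a j - S j) * z ^ j)
        = fun j => a j * z ^ j - ∑ n ∈ Icc 1 N, c n * (logCoeff n j * z ^ j) := by
      funext j
      rw [hS_def]
      simp only [sub_mul, Finset.sum_mul]
      congr 1
      apply Finset.sum_congr rfl
      intro n _
      ring
    rw [he]
    exact h3
  -- bound on S
  have hSbound : ∀ j, ‖S j‖ ≤ ∑ n ∈ Icc 1 N, ‖c n‖ := by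
    intro j
    rw [hS_def]
    refine (norm_sum_le _ _).trans (Finset.sum_le_sum fun n hn => ?_)
    rw [norm_mul]
    calc ‖c n‖ * ‖logCoeff n j‖ ≤ ‖c n‖ * 1 :=
          mul_le_mul_of_nonneg_left (logCoeff_norm_le (Finset.mem_Icc.mp hn).1 j)
            (norm_nonneg _)
      _ = ‖c n‖ := mul_one _
  -- coefficient identification
  have hD : ∀ j : ℕ, iteratedDeriv j
      (fun z : ℂ => f z - ∑ n ∈ Finset.Icc 1 N, c n * Complex.log (1 - z ^ n)) 0
      / (j.factorial : ℂ) = a j - S j := by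
    intro j
    have hB : ∀ i, ‖a i - S i‖ ≤ Ca + ∑ n ∈ Icc 1 N, ‖c n‖ := fun i =>
      (norm_sub_le _ _).trans (add_le_add (hCa i) (hSbound i))
    rw [coeff_eq_of_hasSum hB hgsum j]
    rw [mul_comm, mul_div_assoc, div_self, mul_one]
    exact_mod_cast j.factorial_ne_zero
  simp only [hD]
  -- explicit form of S
  have hS : ∀ j : ℕ, j ≠ 0 → S j = ∑ k ∈ Icc 1 K,
      (if k ∣ j then (if Nat.gcd Q (j / k) = 1 then (k : ℂ) * a k / j else 0) else 0) := by
    intro j hj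
    rw [hS_def]
    simp only [hc_def]
    rw [hN_def]
    exact S_eval a K Q hQ0 j hj
  have hS0 : S 0 = 0 := by
    rw [hS_def]
    apply Finset.sum_eq_zero
    intro n _
    simp [logCoeff]
  have hSA : ∀ j, 1 ≤ j → j ≤ K → S j = a j := by
    intro j h1 hK
    rw [hS j (by omega)]
    rw [Finset.sum_eq_single_of_mem j (Finset.mem_Icc.mpr ⟨h1, hK⟩)]
    · have hjj : j ∣ j := dvd_refl j
      have hgcd : Nat.gcd Q (j / j) = 1 := by
        rw [Nat.div_self (by omega : 0 < j)]
        exact Nat.gcd_one_right Q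
      rw [if_pos hjj, if_pos hgcd]
      have hjc : (j : ℂ) ≠ 0 := Nat.cast_ne_zero.mpr (by omega)
      rw [mul_comm, mul_div_assoc, div_self hjc, mul_one]
    · intro k hk hkne
      by_cases hkj : k ∣ j
      · rw [if_pos hkj, if_neg (gcd_ne_one hpQ hkj hkne (by omega) (by omega))]
      · rw [if_neg hkj]
  have hSB : ∀ j, K < j → j ≤ P → S j = 0 := by
    intro j hKj hjP
    rw [hS j (by omega)]
    apply Finset.sum_eq_zero
    intro k hk
    obtain ⟨hk1, hkK⟩ := Finset.mem_Icc.mp hk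
    by_cases hkj : k ∣ j
    · rw [if_pos hkj, if_neg (gcd_ne_one hpQ hkj (by omega) (by omega) hjP)]
    · rw [if_neg hkj]
  have hSC : ∀ j, P < j → ‖S j‖ ≤ Bb / j := by
    intro j hPj
    have hj0 : j ≠ 0 := by omega
    have hjR : (0:ℝ) < j := by exact_mod_cast Nat.pos_of_ne_zero hj0
    rw [hS j hj0]
    refine (norm_sum_le _ _).trans ?_
    rw [hBb_def, Finset.sum_div]
    apply Finset.sum_le_sum
    intro k hk
    have hb : ‖(k : ℂ) * a k / j‖ = (k : ℝ) * ‖a k‖ / j := by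
      rw [norm_div, norm_mul]
      congr 1
      · congr 1
        simp
      · simp
    split_ifs with h1 h2
    · rw [hb]
    · simp
      positivity
    · simp
      positivity
  -- final estimate
  have hG : ∀ j : ℕ, ‖a j - S j‖ ^ 2 ≤
      2 * (if K < j then ‖a j‖ ^ 2 else 0)
        + 2 * Bb ^ 2 * (if P < j then (1 / (j : ℝ)) ^ 2 else 0) := by
    intro j
    rcases Nat.eq_zero_or_pos j with rfl | hj0
    · have e1 : ¬ (K < 0) := by omega
      have e2 : ¬ (P < 0) := by omega
      simp [ha0, hS0, e1, e2]
    · by_cases hjK : j ≤ K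
      · rw [hSA j hj0 hjK]
        have e1 : ¬ K < j := by omega
        have e2 : ¬ P < j := by omega
        simp [e1, e2]
      · push_neg at hjK
        by_cases hjP : j ≤ P
        · rw [hSB j hjK hjP]
          have e2 : ¬ P < j := by omega
          rw [if_pos hjK, if_neg e2]
          simp only [sub_zero, mul_zero, add_zero]
          nlinarith [sq_nonneg (‖a j‖)]
        · push_neg at hjP
          have hjR : (0:ℝ) < j := by exact_mod_cast hj0
          have h1 : ‖a j - S j‖ ≤ ‖a j‖ + Bb / j :=
            (norm_sub_le _ _).trans (add_le_add_right (hSC j hjP) _)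
          have h4 : ‖a j - S j‖ ^ 2 ≤ (‖a j‖ + Bb / j) ^ 2 :=
            pow_le_pow_left₀ (norm_nonneg _) h1 2
          have h5 : (‖a j‖ + Bb / j) ^ 2 ≤ 2 * ‖a j‖ ^ 2 + 2 * Bb ^ 2 * (1 / (j:ℝ)) ^ 2 := by
            have key : Bb ^ 2 * (1 / (j:ℝ)) ^ 2 = (Bb / j) ^ 2 := by
              field_simp
            nlinarith [sq_nonneg (‖a j‖ - Bb / j), key]
          rw [if_pos hjK, if_pos (by omega : P < j)]
          linarith
  have hq2 : Summable (fun j : ℕ => (1 / (j : ℝ)) ^ 2) := by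
    have h := Real.summable_one_div_nat_pow.mpr (le_refl 2)
    exact h.congr fun n => by rw [one_div_pow]
  have hs1 : Summable (fun j : ℕ => if K < j then ‖a j‖ ^ 2 else 0) := by
    apply Summable.of_nonneg_of_le _ _ hf2
    · intro j; split_ifs <;> positivity
    · intro j; split_ifs with h
      · exact le_refl _
      · positivity
  have hs2 : Summable (fun j : ℕ => if P < j then (1 / (j : ℝ)) ^ 2 else 0) := by
    apply Summable.of_nonneg_of_le _ _ hq2
    · intro j; split_ifs <;> positivity
    · intro j; split_ifs with h
      · exact le_refl _
      · positivity
  have hGs : Summable (fun j : ℕ =>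
      2 * (if K < j then ‖a j‖ ^ 2 else 0)
        + 2 * Bb ^ 2 * (if P < j then (1 / (j : ℝ)) ^ 2 else 0)) :=
    (hs1.mul_left 2).add (hs2.mul_left (2 * Bb ^ 2))
  have hfS : Summable (fun j : ℕ => ‖a j - S j‖ ^ 2) :=
    Summable.of_nonneg_of_le (fun j => by positivity) hG hGs
  calc ∑' j : ℕ, ‖a j - S j‖ ^ 2
      ≤ ∑' j : ℕ, (2 * (if K < j then ‖a j‖ ^ 2 else 0)
        + 2 * Bb ^ 2 * (if P < j then (1 / (j : ℝ)) ^ 2 else 0)) :=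
        Summable.tsum_le_tsum hG hfS hGs
    _ = 2 * (∑' j : ℕ, (if K < j then ‖a j‖ ^ 2 else 0))
        + 2 * Bb ^ 2 * (∑' j : ℕ, (if P < j then (1 / (j : ℝ)) ^ 2 else 0)) := by
        rw [Summable.tsum_add (hs1.mul_left 2) (hs2.mul_left (2 * Bb ^ 2)),
          tsum_mul_left, tsum_mul_left]
    _ < ε ^ 2 := by
        rw [tsum_ite_tail (fun j => ‖a j‖ ^ 2) K,
          tsum_ite_tail (fun j => (1 / (j : ℝ)) ^ 2) P]
        have t2nn : 0 ≤ ∑' k : ℕ, (1 / ((k + (P + 1) : ℕ) : ℝ)) ^ 2 :=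
          tsum_nonneg (fun k => by positivity)
        have hd : 2 * Bb ^ 2 * (ε ^ 2 / (8 * (Bb ^ 2 + 1))) ≤ ε ^ 2 / 4 := by
          rw [mul_div_assoc']
          rw [div_le_div_iff₀ (by positivity) (by norm_num)]
          nlinarith [sq_nonneg ε, sq_nonneg Bb, mul_nonneg (sq_nonneg Bb) (sq_nonneg ε)]
        have hmul := mul_le_mul_of_nonneg_left hPtail.le
          (show (0:ℝ) ≤ 2 * Bb ^ 2 by positivity)
        have hε2 : 0 < ε ^ 2 := by positivity
        linarith
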